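/- Let y₁, y₂ > 0 be real numbers satisfying 27·y₁⁴·y₂⁴ − 18·y₁²·y₂² + 4·y₁² + 4·y₂² = 1. Then every complex root of the polynomial E (a polynomial of degree 6 with leading coefficient y₁² + y₂² + 2 ≠ 0, viewed over ℂ) is real. -/
import Mathlib


open Polynomial

/-- The polynomial `E` viewed over ℂ (degree 6, leading coefficient `y₁²+y₂²+2`). -/
noncomputable def EPoly (y₁ y₂ : ℝ) : Polynomial ℂ :=
  C ((y₁ : ℂ)^2) * (X^2 + 4*X + 1)^3 + C ((y₂ : ℂ)^2) * (X^2 - 2*X - 2)^3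
    + 2*X^6 + 6*X^5 - 15*X^4 - 40*X^3 - 15*X^2 + 6*X + 2

/-- on the curve `27y₁⁴y₂⁴ − 18y₁²y₂² + 4y₁² + 4y₂² = 1` every
complex root of `E` is real. -/
theorem stmt_14 (y₁ y₂ : ℝ) (hy₁ : 0 < y₁) (hy₂ : 0 < y₂)
    (h : 27 * y₁^4 * y₂^4 - 18 * y₁^2 * y₂^2 + 4 * y₁^2 + 4 * y₂^2 = 1) :
    ∀ z : ℂ, (EPoly y₁ y₂).IsRoot z → ∃ r : ℝ, z = (r : ℂ) := by
  intro z hz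
  have he : (y₁:ℂ)^2*(z^2+4*z+1)^3 + (y₂:ℂ)^2*(z^2-2*z-2)^3
      + (z^2+4*z+1)*(z^2-2*z-2)*((z^2+4*z+1)+(z^2-2*z-2)) = 0 := by
    simp [EPoly, IsRoot] at hz
    linear_combination hz
  have hy₁c : (y₁:ℂ)^2 ≠ 0 := pow_ne_zero 2 (by exact_mod_cast hy₁.ne')
  by_cases hb : (z^2-2*z-2 : ℂ) = 0
  · -- degenerate case: then also z²+4z+1 = 0, so 6z+3 = 0, z = -1/2
    have ha3 : (y₁:ℂ)^2 * (z^2+4*z+1)^3 = 0 := by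
      linear_combination he - ((y₂:ℂ)^2*(z^2-2*z-2)^2
        + (z^2+4*z+1)*((z^2+4*z+1)+(z^2-2*z-2))) * hb
    have ha : (z^2+4*z+1 : ℂ) = 0 := by
      have := (mul_eq_zero.mp ha3).resolve_left hy₁c
      exact pow_eq_zero_iff (by norm_num) |>.mp this
    refine ⟨-(1/2), ?_⟩
    have h6 : (6:ℂ)*z + 3 = 0 := by linear_combination ha - hb
    push_cast
    linear_combination (1/6 : ℂ) * h6
  · -- main case: u := a/b satisfies the cubic y₁²u³+u²+u+y₂² = 0
    set u : ℂ := (z^2+4*z+1)/(z^2-2*z-2) with hu_def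
    have hab : (z^2+4*z+1 : ℂ) = u * (z^2-2*z-2) := (div_mul_cancel₀ _ hb).symm
    have h3 : ((y₁:ℂ)^2*u^3 + u^2 + u + (y₂:ℂ)^2) * (z^2-2*z-2)^3 = 0 := by
      rw [hab] at he
      linear_combination he
    have hu : (y₁:ℂ)^2*u^3 + u^2 + u + (y₂:ℂ)^2 = 0 :=
      (mul_eq_zero.mp h3).resolve_right (pow_ne_zero 3 hb)
    obtain ⟨x, y, hxy⟩ : ∃ x y : ℝ, u = (x:ℂ) + (y:ℂ)*Complex.I :=
      ⟨u.re, u.im, (Complex.re_add_im u).symm⟩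
    rw [hxy] at hu
    have hG : ((y₁^2*(x^3-3*x*y^2) + (x^2-y^2) + x + y₂^2 : ℝ) : ℂ)
        + ((y₁^2*(3*x^2*y-y^3) + (2*x*y+y) : ℝ) : ℂ) * Complex.I = 0 := by
      push_cast
      linear_combination hu - ((3:ℂ)*(y₁:ℂ)^2*x*y^2 + (y:ℂ)^2
        + (y₁:ℂ)^2*(y:ℂ)^3*Complex.I) * Complex.I_sq
    have hre : y₁^2*(x^3-3*x*y^2) + (x^2-y^2) + x + y₂^2 = 0 := by
      have := congrArg Complex.re hG
      simpa only [Complex.add_re, Complex.mul_re, Complex.ofReal_re,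
        Complex.ofReal_im, Complex.I_re, Complex.I_im, Complex.zero_re,
        mul_zero, zero_mul, mul_one, sub_zero, add_zero, zero_add] using this
    have him : y₁^2*(3*x^2*y-y^3) + (2*x*y+y) = 0 := by
      have := congrArg Complex.im hG
      simpa only [Complex.add_im, Complex.mul_im, Complex.ofReal_re,
        Complex.ofReal_im, Complex.I_re, Complex.I_im, Complex.zero_im,
        mul_zero, zero_mul, mul_one, sub_zero, add_zero, zero_add] using this
    -- show y = 0
    have hy0 : y = 0 := by
      by_contra hy
      have hE1 : 3*y₁^2*x^2 - y₁^2*y^2 + 2*x + 1 = 0 := by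
        have h6 : y * (3*y₁^2*x^2 - y₁^2*y^2 + 2*x + 1) = 0 := by
          linear_combination him
        exact (mul_eq_zero.mp h6).resolve_left hy
      have hE2 : y₁^2*x^3 - 3*y₁^2*x*y^2 + x^2 - y^2 + x + y₂^2 = 0 := by
        linear_combination hre
      have hΔ : 18*(y₁^2)*(y₂^2) - 4*(y₂^2) + 1 - 4*(y₁^2)
          - 27*(y₁^2)^2*(y₂^2)^2 = 0 := by linear_combination -h
      -- discriminant identity: p³·4w·T² = 0
      have key : (y₁^2)^3 * (4*y^2*((3*y₁^2*x+1)^2 + (y₁^2)^2*y^2)^2) = 0 := by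
        linear_combination
          (-(-(y₁^2)^3 - 2*(y₁^2)^3*x + 4*(y₁^2)^4 - 19*(y₁^2)^4*y^2
            + 10*(y₁^2)^4*x + (y₁^2)^4*x^2 + 4*(y₁^2)^5*y^2
            - 106*(y₁^2)^5*x*y^2 + 15*(y₁^2)^5*x^2 + 12*(y₁^2)^5*x^3
            + 4*(y₁^2)^6*y^4 - 159*(y₁^2)^6*x^2*y^2 + 9*(y₁^2)^6*x^4)) * hE1
          + (-4*(y₁^2)^3 + 18*(y₁^2)^4 - 27*(y₁^2)^5*(y₂^2) - 27*(y₁^2)^5*y^2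
            + 27*(y₁^2)^5*x + 27*(y₁^2)^5*x^2 - 81*(y₁^2)^6*x*y^2
            + 27*(y₁^2)^6*x^3) * hE2
          - (y₁^2)^3 * hΔ
      have hppos : (0:ℝ) < y₁^2 := by positivity
      have hwpos : (0:ℝ) < y^2 :=
        lt_of_le_of_ne (sq_nonneg y) (Ne.symm (pow_ne_zero 2 hy))
      have hTpos : (0:ℝ) < (3*y₁^2*x+1)^2 + (y₁^2)^2*y^2 := by
        have := mul_pos (pow_pos hppos 2) hwpos
        nlinarith [sq_nonneg (3*y₁^2*x+1)]
      have : (0:ℝ) < (y₁^2)^3 * (4*y^2*((3*y₁^2*x+1)^2 + (y₁^2)^2*y^2)^2) := by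
        have := mul_pos hTpos hTpos
        positivity
      linarith
    -- now u = x is real; z satisfies a real quadratic
    rw [hy0] at hxy
    simp only [Complex.ofReal_zero, zero_mul, add_zero] at hxy
    rw [hxy] at hab
    have hquad : ((1:ℂ) - (x:ℂ))*z^2 + (4+2*(x:ℂ))*z + (1+2*(x:ℂ)) = 0 := by
      linear_combination hab
    by_cases hx1 : (x:ℝ) = 1
    · refine ⟨-(1/2), ?_⟩
      rw [hx1] at hquad
      push_cast at hquad ⊢
      linear_combination (1/6 : ℂ) * hquad
    · set v : ℂ := ((1-x : ℝ):ℂ)*z + ((2+x : ℝ):ℂ) with hv_def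
      have hv2 : v^2 = ((3*x^2+3*x+3 : ℝ):ℂ) := by
        rw [hv_def]; push_cast
        linear_combination ((1:ℂ)-(x:ℂ)) * hquad
      have hd : (0:ℝ) < 3*x^2+3*x+3 := by nlinarith [sq_nonneg (2*x+1)]
      have h7 : v.re * v.im + v.im * v.re = 0 := by
        have := congrArg Complex.im hv2
        rw [sq] at this
        simpa only [Complex.mul_im, Complex.ofReal_im] using this
      have h8 : v.re * v.re - v.im * v.im = 3*x^2+3*x+3 := by
        have := congrArg Complex.re hv2
        rw [sq] at this
        simpa only [Complex.mul_re, Complex.ofReal_re] using this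
      have hvim : v.im = 0 := by
        by_contra hvim
        have hvre : v.re = 0 := by
          have := mul_eq_zero.mp (by linarith : v.re * v.im = 0)
          exact this.resolve_right hvim
        rw [hvre] at h8
        nlinarith [sq_nonneg v.im]
      have hzim : z.im = 0 := by
        have h9 : v.im = (1-x) * z.im := by
          rw [hv_def]
          simp [Complex.add_im, Complex.mul_im]
        have hx1' : (1-x : ℝ) ≠ 0 := sub_ne_zero.mpr (Ne.symm hx1)
        have := h9.symm.trans hvim
        exact (mul_eq_zero.mp this).resolve_left hx1'
      exact ⟨z.re, (Complex.ext (by simp) (by simp [hzim])).symm⟩
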